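/- Let n ∈ ℕ, μ > 0 and x* ∈ ℝⁿ. Let B₁(μ) := {y ∈ ℝⁿ : ‖y‖₁ ≤ μ}, a nonempty closed convex set, and let p* ∈ B₁(μ) be the (unique) point of B₁(μ) nearest to x* in the Euclidean norm, i.e., p* ∈ B₁(μ) and ‖x* − p*‖₂ ≤ ‖x* − y‖₂ for all y ∈ B₁(μ). Then x* − p* is the unique global minimizer of the function y ↦ μ‖y‖∞ + (1/2)‖y − x*‖₂². -/

import Mathlib

open RealInnerProductSpace

noncomputable def l1Norm {n : ℕ} (x : Fin n → ℝ) : ℝ := ∑ i, |x i|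

noncomputable def linfNorm {n : ℕ} (x : Fin n → ℝ) : ℝ :=
  ‖(WithLp.equiv ⊤ (Fin n → ℝ)).symm x‖

lemma linfNorm_eq {n : ℕ} (x : Fin n → ℝ) : linfNorm x = ⨆ i, |x i| := by
  simp [linfNorm, PiLp.norm_eq_ciSup, Real.norm_eq_abs]

lemma abs_le_linfNorm {n : ℕ} (x : Fin n → ℝ) (i : Fin n) : |x i| ≤ linfNorm x := by
  rw [linfNorm_eq]
  exact le_ciSup (Set.Finite.bddAbove (Set.finite_range fun j => |x j|)) i

lemma linfNorm_nonneg {n : ℕ} (x : Fin n → ℝ) : 0 ≤ linfNorm x := norm_nonneg _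

lemma holder {n : ℕ} (x y : EuclideanSpace ℝ (Fin n)) :
    ⟪x, y⟫ ≤ linfNorm x * l1Norm y := by
  have h1 : ⟪x, y⟫ = ∑ i, x i * y i := by
    simp [PiLp.inner_apply, RCLike.inner_apply, mul_comm]
  rw [h1, l1Norm, Finset.mul_sum]
  refine Finset.sum_le_sum fun i _ => ?_
  calc x i * y i ≤ |x i * y i| := le_abs_self _
    _ = |x i| * |y i| := abs_mul _ _
    _ ≤ linfNorm x * |y i| := by
        exact mul_le_mul_of_nonneg_right (abs_le_linfNorm x i) (abs_nonneg _)

/-- Moreau decomposition for the `ℓ∞`-norm: `Prox_{μ‖·‖∞}(x*) = x* − Π_{B₁(μ)}(x*)`. -/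
theorem stmt_8 {n : ℕ} (μ : ℝ) (hμ : 0 < μ) (xstar : EuclideanSpace ℝ (Fin n))
    (g : EuclideanSpace ℝ (Fin n) → ℝ)
    (hg : ∀ y, g y = μ * linfNorm y + 1 / 2 * ‖y - xstar‖ ^ 2)
    (pstar : EuclideanSpace ℝ (Fin n))
    (hp1 : l1Norm pstar ≤ μ)
    (hp2 : ∀ y : EuclideanSpace ℝ (Fin n), l1Norm y ≤ μ → ‖xstar - pstar‖ ≤ ‖xstar - y‖) :
    (∀ y, g (xstar - pstar) ≤ g y) ∧
      ∀ y : EuclideanSpace ℝ (Fin n), (∀ z, g y ≤ g z) → y = xstar - pstar := by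
  set K : Set (EuclideanSpace ℝ (Fin n)) := {z | l1Norm z ≤ μ} with hK
  have hKconvex : Convex ℝ K := by
    intro a ha b hb s t hs ht hst
    have : l1Norm (s • a + t • b) ≤ s * l1Norm a + t * l1Norm b := by
      simp only [l1Norm, Finset.mul_sum, ← Finset.sum_add_distrib]
      refine Finset.sum_le_sum fun i _ => ?_
      have : (s • a + t • b) i = s * a i + t * b i := by simp
      rw [this]
      calc |s * a i + t * b i| ≤ |s * a i| + |t * b i| := abs_add_le _ _
        _ = s * |a i| + t * |b i| := by
            rw [abs_mul, abs_mul, abs_of_nonneg hs, abs_of_nonneg ht]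
    calc l1Norm (s • a + t • b) ≤ s * l1Norm a + t * l1Norm b := this
      _ ≤ s * μ + t * μ := by
          exact add_le_add (mul_le_mul_of_nonneg_left ha hs)
            (mul_le_mul_of_nonneg_left hb ht)
      _ = μ := by rw [← add_mul, hst, one_mul]
  have hpK : pstar ∈ K := hp1
  have hinf : ‖xstar - pstar‖ = ⨅ w : K, ‖xstar - w‖ := by
    haveI : Nonempty K := ⟨⟨pstar, hpK⟩⟩
    refine le_antisymm (le_ciInf fun w => hp2 w w.2) ?_
    exact ciInf_le ⟨0, fun _ ⟨_, h⟩ => h ▸ norm_nonneg _⟩ (⟨pstar, hpK⟩ : K)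
  have hchar : ∀ w ∈ K, ⟪xstar - pstar, w - pstar⟫ ≤ 0 :=
    (norm_eq_iInf_iff_real_inner_le_zero hKconvex hpK).mp hinf
  set u : EuclideanSpace ℝ (Fin n) := xstar - pstar with hu
  -- ⟪u, pstar⟫ = μ * linfNorm u
  have hle : ⟪u, pstar⟫ ≤ μ * linfNorm u := by
    calc ⟪u, pstar⟫ ≤ linfNorm u * l1Norm pstar := holder u pstar
      _ ≤ linfNorm u * μ := mul_le_mul_of_nonneg_left hp1 (linfNorm_nonneg u)
      _ = μ * linfNorm u := mul_comm _ _
  have hge : μ * linfNorm u ≤ ⟪u, pstar⟫ := by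
    rcases isEmpty_or_nonempty (Fin n) with hn | hn
    · have h0 : linfNorm u = 0 := by
        rw [linfNorm_eq]
        exact Real.iSup_of_isEmpty _
      have h1 : ⟪u, pstar⟫ = 0 := by
        simp [PiLp.inner_apply, RCLike.inner_apply]
      rw [h0, h1, mul_zero]
    · obtain ⟨i, -, hi⟩ := Finset.exists_max_image Finset.univ (fun i => |u i|)
        ⟨Classical.arbitrary _, Finset.mem_univ _⟩
      have hlinf : linfNorm u = |u i| := by
        rw [linfNorm_eq]
        refine le_antisymm (ciSup_le fun j => hi j (Finset.mem_univ j)) ?_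
        exact le_ciSup (Set.Finite.bddAbove (Set.finite_range fun j => |u j|)) i
      set s : ℝ := ((SignType.sign (u i) : SignType) : ℝ) with hs
      set z : EuclideanSpace ℝ (Fin n) := WithLp.toLp 2 (fun j => if j = i then μ * s else 0) with hz
      have habs_s : |s| ≤ 1 := by
        rcases lt_trichotomy (u i) 0 with h | h | h
        · simp [hs, sign_neg h]
        · simp [hs, h]
        · simp [hs, sign_pos h]
      have hzK : z ∈ K := by
        have : l1Norm z = μ * |s| := by
          simp only [l1Norm, hz, PiLp.toLp_apply]
          rw [Finset.sum_eq_single i]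
          · rw [if_pos rfl, abs_mul, abs_of_pos hμ]
          · intro j _ hj; rw [if_neg hj, abs_zero]
          · intro h; exact absurd (Finset.mem_univ i) h
        rw [hK, Set.mem_setOf_eq, this]
        calc μ * |s| ≤ μ * 1 := mul_le_mul_of_nonneg_left habs_s hμ.le
          _ = μ := mul_one μ
      have hinner_z : ⟪u, z⟫ = μ * linfNorm u := by
        have h1 : ⟪u, z⟫ = ∑ j, u j * z j := by
          simp [PiLp.inner_apply, RCLike.inner_apply, mul_comm]
        rw [h1, Finset.sum_eq_single i]
        · show u i * (if i = i then μ * s else 0) = _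
          rw [if_pos rfl, hlinf]
          have : u i * s = |u i| := self_mul_sign (u i)
          calc u i * (μ * s) = μ * (u i * s) := by ring
            _ = μ * |u i| := by rw [this]
        · intro j _ hj
          show u j * (if j = i then μ * s else 0) = 0
          rw [if_neg hj, mul_zero]
        · intro h; exact absurd (Finset.mem_univ i) h
      have := hchar z hzK
      rw [inner_sub_right] at this
      rw [← hinner_z]
      linarith
  have hkey : ∀ y, g u + 1 / 2 * ‖y - u‖ ^ 2 ≤ g y := by
    intro y
    rw [hg, hg]
    have hsub : u - xstar = -pstar := by rw [hu]; abel
    have h1 : ‖u - xstar‖ ^ 2 = ‖pstar‖ ^ 2 := by rw [hsub, norm_neg]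
    have h2 : y - xstar = (y - u) - pstar := by rw [hu]; abel
    have h3 : ‖y - xstar‖ ^ 2 = ‖y - u‖ ^ 2 - 2 * ⟪y - u, pstar⟫ + ‖pstar‖ ^ 2 := by
      rw [h2]; exact norm_sub_sq_real (y - u) pstar
    have h4 : ⟪y, pstar⟫ ≤ μ * linfNorm y := by
      calc ⟪y, pstar⟫ ≤ linfNorm y * l1Norm pstar := holder y pstar
        _ ≤ linfNorm y * μ := mul_le_mul_of_nonneg_left hp1 (linfNorm_nonneg y)
        _ = μ * linfNorm y := mul_comm _ _
    have h5 : ⟪y - u, pstar⟫ = ⟪y, pstar⟫ - ⟪u, pstar⟫ := inner_sub_left y u pstar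
    have heq : ⟪u, pstar⟫ = μ * linfNorm u := le_antisymm hle hge
    rw [h1, h3]
    nlinarith [heq, h4, h5]
  constructor
  · intro y
    have := hkey y
    nlinarith [sq_nonneg ‖y - u‖]
  · intro y hy
    have h1 := hkey y
    have h2 := hy u
    have h3 : ‖y - u‖ ^ 2 ≤ 0 := by linarith
    have h4 : ‖y - u‖ = 0 := by
      have := sq_nonneg ‖y - u‖
      nlinarith [norm_nonneg (y - u)]
    have : y - u = 0 := norm_eq_zero.mp h4
    exact sub_eq_zero.mp this
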